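/- arXiv:2410.18604 — 4 statements merged into one kernel-verified Lean document; each statement's English description precedes it below -/
import Mathlib

section
/- For every i ∈ I, the endomorphisms σ_i and σ_i' of 𝒜 are mutually inverse: σ_i ∘ σ_i' = id_𝒜 and σ_i' ∘ σ_i = id_𝒜. In particular each σ_i is an F-algebra automorphism of 𝒜. -/
/-!
Braid group action on the twisted semi-derived Hall algebra (Contu, arXiv:2410.18604).

We work with the algebra `𝒜 = 𝒮𝒟ℋ_tw(C^b(𝒫))` given by its presentation
(Proposition `prop_presenentation_semiderived_E_i` of the paper): generators
`E_{i,m}`, `K_{i,m}`, `K_{i,m}⁻¹` (`i ∈ I`, `m ∈ ℤ`) over `F = ℚ(v^{1/2})`,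
subject to the relations (SD0)–(SD5).
-/

noncomputable section

namespace SDHall

/-- The field `ℚ(v^{1/2})` of rational functions over `ℚ` in one indeterminate `v^{1/2}`. -/
abbrev F₀ : Type := RatFunc ℚ

/-- The indeterminate `v^{1/2}`. -/
def sq : F₀ := RatFunc.X

/-- `v := (v^{1/2})²`. -/
def v : F₀ := sq ^ 2

/-- The sign `(-1)^n` for an integer `n`. -/
def sgn (n : ℤ) : ℤ := (((-1 : ℤˣ) ^ n : ℤˣ) : ℤ)

/-- Generators `E_{i,m}`, `K_{i,m}`, `K_{i,m}⁻¹` of the presented algebra. -/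
inductive Gen (I : Type) : Type
  | E : I → ℤ → Gen I
  | K : I → ℤ → Gen I
  | Kinv : I → ℤ → Gen I

variable {I : Type}

def e (i : I) (m : ℤ) : FreeAlgebra F₀ (Gen I) := FreeAlgebra.ι F₀ (Gen.E i m)
def κ (i : I) (m : ℤ) : FreeAlgebra F₀ (Gen I) := FreeAlgebra.ι F₀ (Gen.K i m)
def κ' (i : I) (m : ℤ) : FreeAlgebra F₀ (Gen I) := FreeAlgebra.ι F₀ (Gen.Kinv i m)

/-- The defining relations (SD0)–(SD5) of the twisted semi-derived Hall algebra:
(SD0) `K_{i,m}K_{i,m}⁻¹ = 1 = K_{i,m}⁻¹K_{i,m}`;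
(SD1) each `K_{i,m}` is central;
(SD2) `E_{i,m}E_{j,m} = E_{j,m}E_{i,m}` if `a_{ij} = 0`;
(SD3) `E_{i,m}²E_{j,m} − (v+v⁻¹)E_{i,m}E_{j,m}E_{i,m} + E_{j,m}E_{i,m}² = 0` if `a_{ij} = −1`;
(SD4) `E_{i,m+1}E_{j,m} = v^{a_{ij}}E_{j,m}E_{i,m+1} + δ_{ij}(1−v²)K_{i,m}`
      (split into the cases `i ≠ j` and `i = j`);
(SD5) `E_{j,r}E_{i,l} = v^{−(−1)^{r−l}a_{ij}}E_{i,l}E_{j,r}` for `r > l+1`. -/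
inductive Rel (a : I → I → ℤ) : FreeAlgebra F₀ (Gen I) → FreeAlgebra F₀ (Gen I) → Prop
  | sd0a (i : I) (m : ℤ) : Rel a (κ i m * κ' i m) 1
  | sd0b (i : I) (m : ℤ) : Rel a (κ' i m * κ i m) 1
  | sd1 (i : I) (m : ℤ) (x : FreeAlgebra F₀ (Gen I)) : Rel a (κ i m * x) (x * κ i m)
  | sd2 (i j : I) (m : ℤ) : a i j = 0 → Rel a (e i m * e j m) (e j m * e i m)
  | sd3 (i j : I) (m : ℤ) : a i j = -1 →
      Rel a (e i m ^ 2 * e j m - (v + v⁻¹) • (e i m * e j m * e i m) + e j m * e i m ^ 2) 0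
  | sd4_ne (i j : I) (m : ℤ) : i ≠ j →
      Rel a (e i (m + 1) * e j m) ((v ^ (a i j)) • (e j m * e i (m + 1)))
  | sd4_eq (i : I) (m : ℤ) :
      Rel a (e i (m + 1) * e i m)
        ((v ^ (a i i)) • (e i m * e i (m + 1)) + ((1 : F₀) - v ^ 2) • κ i m)
  | sd5 (i j : I) (r l : ℤ) : r > l + 1 →
      Rel a (e j r * e i l) ((v ^ (-(sgn (r - l)) * a i j)) • (e i l * e j r))

/-- The twisted semi-derived Hall algebra `𝒜`, presented by generators and relations. -/
abbrev A (a : I → I → ℤ) : Type := RingQuot (Rel a)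

/-- The generator `E_{i,m}` of `𝒜`. -/
def E (a : I → I → ℤ) (i : I) (m : ℤ) : A a := RingQuot.mkAlgHom F₀ (Rel a) (e i m)

/-- The generator `K_{i,m}` of `𝒜`. -/
def K (a : I → I → ℤ) (i : I) (m : ℤ) : A a := RingQuot.mkAlgHom F₀ (Rel a) (κ i m)

/-- The generator `K_{i,m}⁻¹` of `𝒜`. -/
def Kinv (a : I → I → ℤ) (i : I) (m : ℤ) : A a := RingQuot.mkAlgHom F₀ (Rel a) (κ' i m)

/-- `a` is a simply-laced generalized Cartan matrix: symmetric, `a_{ii} = 2`,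
and `a_{ij} ∈ {0, −1}` for `i ≠ j`. -/
def IsCartan (a : I → I → ℤ) : Prop :=
  (∀ i j, a i j = a j i) ∧ (∀ i, a i i = 2) ∧ ∀ i j, i ≠ j → a i j = 0 ∨ a i j = -1

/-- The element `(v^{1/2}E_{i,m}E_{j,m} − v^{−1/2}E_{j,m}E_{i,m})/(v − v^{−1})` of `𝒜`. -/
def T (a : I → I → ℤ) (i j : I) (m : ℤ) : A a :=
  (v - v⁻¹)⁻¹ • (sq • (E a i m * E a j m) - sq⁻¹ • (E a j m * E a i m))

/-- The defining formulas for the braid group operator `σᵢ` on the generators: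
`σᵢ(E_{i,m}) = E_{i,m+1}K_{i,m}⁻¹`;
`σᵢ(E_{j,m}) = (v^{1/2}E_{i,m}E_{j,m} − v^{−1/2}E_{j,m}E_{i,m})/(v − v^{−1})` if `a_{ij} = −1`;
`σᵢ(E_{j,m}) = E_{j,m}` if `a_{ij} = 0`;
`σᵢ(K_{i,m}) = K_{i,m}⁻¹`; `σᵢ(K_{j,m}) = K_{i,m}K_{j,m}` if `a_{ij} = −1`;
`σᵢ(K_{j,m}) = K_{j,m}` if `a_{ij} = 0`. -/
def SigmaSpec (a : I → I → ℤ) (i : I) (σ : A a →ₐ[F₀] A a) : Prop :=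
  (∀ m : ℤ, σ (E a i m) = E a i (m + 1) * Kinv a i m) ∧
  (∀ (j : I) (m : ℤ), a i j = -1 → σ (E a j m) = T a i j m) ∧
  (∀ (j : I) (m : ℤ), a i j = 0 → σ (E a j m) = E a j m) ∧
  (∀ m : ℤ, σ (K a i m) = Kinv a i m) ∧
  (∀ (j : I) (m : ℤ), a i j = -1 → σ (K a j m) = K a i m * K a j m) ∧
  (∀ (j : I) (m : ℤ), a i j = 0 → σ (K a j m) = K a j m)

/-- The defining formulas for the inverse operator `σᵢ'` on the generators:
`σᵢ'(E_{i,m}) = E_{i,m−1}K_{i,m−1}⁻¹`;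
`σᵢ'(E_{j,m}) = (v^{1/2}E_{j,m}E_{i,m} − v^{−1/2}E_{i,m}E_{j,m})/(v − v^{−1})` if `a_{ij} = −1`;
`σᵢ'(E_{j,m}) = E_{j,m}` if `a_{ij} = 0`;
`σᵢ'(K_{i,m}) = K_{i,m}⁻¹`; `σᵢ'(K_{j,m}) = K_{i,m}K_{j,m}` if `a_{ij} = −1`;
`σᵢ'(K_{j,m}) = K_{j,m}` if `a_{ij} = 0`. -/
def SigmaSpec' (a : I → I → ℤ) (i : I) (σ : A a →ₐ[F₀] A a) : Prop :=
  (∀ m : ℤ, σ (E a i m) = E a i (m - 1) * Kinv a i (m - 1)) ∧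
  (∀ (j : I) (m : ℤ), a i j = -1 → σ (E a j m) = T a j i m) ∧
  (∀ (j : I) (m : ℤ), a i j = 0 → σ (E a j m) = E a j m) ∧
  (∀ m : ℤ, σ (K a i m) = Kinv a i m) ∧
  (∀ (j : I) (m : ℤ), a i j = -1 → σ (K a j m) = K a i m * K a j m) ∧
  (∀ (j : I) (m : ℤ), a i j = 0 → σ (K a j m) = K a j m)



open RingQuot

variable {I : Type} {a : I → I → ℤ}

lemma sq_ne : (sq : F₀) ≠ 0 := RatFunc.X_ne_zero

lemma v_ne : (v : F₀) ≠ 0 := pow_ne_zero _ sq_ne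

lemma v_sq_ne_one : (v : F₀) ^ 2 ≠ 1 := by
  intro h
  have h4 : (RatFunc.X : F₀) ^ 4 = 1 := by
    have : (v : F₀) ^ 2 = RatFunc.X ^ 4 := by rw [v, sq]; ring
    rw [this] at h; exact h
  have : (algebraMap (Polynomial ℚ) (RatFunc ℚ)) (Polynomial.X ^ 4) =
      (algebraMap (Polynomial ℚ) (RatFunc ℚ)) 1 := by
    simpa [map_pow, RatFunc.algebraMap_X] using h4
  have hp : (Polynomial.X : Polynomial ℚ) ^ 4 = 1 := RatFunc.algebraMap_injective ℚ this
  have := congrArg (Polynomial.eval (2 : ℚ)) hp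
  norm_num at this

lemma vsub_ne : (v : F₀) - v⁻¹ ≠ 0 := by
  intro h
  apply v_sq_ne_one
  have hv : (v : F₀) = v⁻¹ := sub_eq_zero.mp h
  have : (v : F₀) * v = v⁻¹ * v := by rw [← hv]
  rw [inv_mul_cancel₀ v_ne] at this
  rw [pow_two]; exact this

lemma K_mul_Kinv (i : I) (m : ℤ) : K a i m * Kinv a i m = 1 := by
  have h := RingQuot.mkAlgHom_rel F₀ (Rel.sd0a (a := a) i m)
  simpa only [map_mul, map_one, K, Kinv] using h

lemma Kinv_mul_K (i : I) (m : ℤ) : Kinv a i m * K a i m = 1 := by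
  have h := RingQuot.mkAlgHom_rel F₀ (Rel.sd0b (a := a) i m)
  simpa only [map_mul, map_one, K, Kinv] using h

lemma K_central (i : I) (m : ℤ) (x : A a) : K a i m * x = x * K a i m := by
  obtain ⟨y, rfl⟩ := RingQuot.mkAlgHom_surjective F₀ (Rel a) x
  have h := RingQuot.mkAlgHom_rel F₀ (Rel.sd1 (a := a) i m y)
  simpa only [map_mul, K] using h

lemma Kinv_central (i : I) (m : ℤ) (x : A a) : Kinv a i m * x = x * Kinv a i m := by
  have h1 : Kinv a i m * x * K a i m = x := by
    rw [mul_assoc, ← K_central, ← mul_assoc, Kinv_mul_K, one_mul]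
  calc Kinv a i m * x = Kinv a i m * x * (K a i m * Kinv a i m) := by
        rw [K_mul_Kinv, mul_one]
    _ = (Kinv a i m * x * K a i m) * Kinv a i m := by rw [← mul_assoc]
    _ = x * Kinv a i m := by rw [h1]

lemma rel4_ne {i j : I} (h : i ≠ j) (m : ℤ) :
    E a i (m + 1) * E a j m = ((v : F₀) ^ (a i j)) • (E a j m * E a i (m + 1)) := by
  have hr := RingQuot.mkAlgHom_rel F₀ (Rel.sd4_ne (a := a) i j m h)
  simpa only [map_mul, map_smul, E] using hr

lemma rel4_eq (i : I) (m : ℤ) :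
    E a i (m + 1) * E a i m =
      ((v : F₀) ^ (a i i)) • (E a i m * E a i (m + 1)) + ((1 : F₀) - v ^ 2) • K a i m := by
  have hr := RingQuot.mkAlgHom_rel F₀ (Rel.sd4_eq (a := a) i m)
  simpa only [map_mul, map_smul, map_add, E, K] using hr

/-- Key computation for `σ ∘ σ'` on `E_{j,m}` when `a i j = -1`. -/
lemma keyA {R : Type} [Ring R] [Algebra F₀ R] (Ei Ej Y Kel : R)
    (hYj : Y * Ej = (v : F₀)⁻¹ • (Ej * Y))
    (hYi : Y * Ei = ((v : F₀) ^ 2) • (Ei * Y) + ((1 : F₀) - v ^ 2) • Kel)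
    (hKj : Ej * Kel = Kel * Ej) :
    ((v : F₀) - v⁻¹)⁻¹ • ((sq : F₀) • ((((v : F₀) - v⁻¹)⁻¹ •
        ((sq : F₀) • (Ei * Ej) - (sq : F₀)⁻¹ • (Ej * Ei))) * Y)
      - (sq : F₀)⁻¹ • (Y * (((v : F₀) - v⁻¹)⁻¹ •
        ((sq : F₀) • (Ei * Ej) - (sq : F₀)⁻¹ • (Ej * Ei))))) = Kel * Ej := by
  have hsq : (sq : F₀) ≠ 0 := sq_ne
  have hv : (v : F₀) ≠ 0 := v_ne
  have hvv : (v : F₀) - v⁻¹ ≠ 0 := vsub_ne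
  have e1 : Y * (Ei * Ej) = (v : F₀) • (Ei * (Ej * Y)) + ((1 : F₀) - v ^ 2) • (Kel * Ej) := by
    rw [← mul_assoc, hYi, add_mul, smul_mul_assoc, smul_mul_assoc, mul_assoc, hYj,
      mul_smul_comm, smul_smul]
    congr 2
    field_simp [v_ne]
  have e2 : Y * (Ej * Ei) = (v : F₀) • (Ej * (Ei * Y))
      + ((v : F₀)⁻¹ * ((1 : F₀) - v ^ 2)) • (Kel * Ej) := by
    rw [← mul_assoc, hYj, smul_mul_assoc, mul_assoc, hYi, mul_add, mul_smul_comm,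
      mul_smul_comm, smul_add, smul_smul, smul_smul, ← hKj]
    congr 2
    field_simp [v_ne]
  rw [smul_mul_assoc, sub_mul, smul_mul_assoc, smul_mul_assoc, mul_assoc, mul_assoc,
    mul_smul_comm, mul_sub, mul_smul_comm, mul_smul_comm, e1, e2]
  simp only [smul_sub, smul_add, smul_smul]
  have hvd : (v : F₀) = sq ^ 2 := rfl
  have key0 : (sq : F₀) * sq = sq⁻¹ * (sq * v) := by
    rw [hvd, ← mul_assoc, inv_mul_cancel₀ hsq, one_mul]
    ring
  have key1 : (sq : F₀) * sq⁻¹ = sq⁻¹ * (sq⁻¹ * v) := by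
    rw [hvd]
    field_simp
  have hx : ((v:F₀) - v⁻¹)⁻¹ * (sq * (((v:F₀) - v⁻¹)⁻¹ * sq)) =
      ((v:F₀) - v⁻¹)⁻¹ * (sq⁻¹ * (((v:F₀) - v⁻¹)⁻¹ * (sq * v))) := by
    linear_combination (((v:F₀) - v⁻¹)⁻¹)^2 * key0
  have hy : ((v:F₀) - v⁻¹)⁻¹ * (sq * (((v:F₀) - v⁻¹)⁻¹ * sq⁻¹)) =
      ((v:F₀) - v⁻¹)⁻¹ * (sq⁻¹ * (((v:F₀) - v⁻¹)⁻¹ * (sq⁻¹ * v))) := by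
    linear_combination (((v:F₀) - v⁻¹)⁻¹)^2 * key1
  rw [← hx, ← hy]
  have habel : ∀ (A B C : R) (s t : F₀),
      (((v:F₀) - v⁻¹)⁻¹ * (sq * (((v:F₀) - v⁻¹)⁻¹ * sq))) • A -
        (((v:F₀) - v⁻¹)⁻¹ * (sq * (((v:F₀) - v⁻¹)⁻¹ * sq⁻¹))) • B -
        ((((v:F₀) - v⁻¹)⁻¹ * (sq * (((v:F₀) - v⁻¹)⁻¹ * sq))) • A + s • C -
          ((((v:F₀) - v⁻¹)⁻¹ * (sq * (((v:F₀) - v⁻¹)⁻¹ * sq⁻¹))) • B + t • C)) = (t - s) • C := by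
    intro A B C s t
    rw [sub_smul]
    abel
  rw [habel]
  conv_rhs => rw [← one_smul F₀ (Kel * Ej)]
  congr 1
  have hne : (sq : F₀) ^ 4 - 1 ≠ 0 := by
    intro h
    apply v_sq_ne_one
    have : (v : F₀) ^ 2 = sq ^ 4 := by rw [hvd]; ring
    rw [this]
    linear_combination h
  have hd : (sq : F₀) ^ 2 - (sq ^ 2)⁻¹ = (sq ^ 4 - 1) / sq ^ 2 := by
    field_simp
  rw [hvd, hd, inv_div]
  field_simp [hne]
  have hD : ((sq:F₀) ^ 4 - 1) * (sq * ((sq ^ 4 - 1) * (sq * sq ^ 2))) ≠ 0 :=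
    mul_ne_zero hne (mul_ne_zero hsq (mul_ne_zero hne (mul_ne_zero hsq (pow_ne_zero _ hsq))))
  ring

/-- Key computation for `σ' ∘ σ` on `E_{j,m}` when `a i j = -1`. -/
lemma keyB {R : Type} [Ring R] [Algebra F₀ R] (Ei Ej X Kel : R)
    (hjX : Ej * X = (v : F₀)⁻¹ • (X * Ej))
    (hiX : Ei * X = ((v : F₀) ^ 2) • (X * Ei) + ((1 : F₀) - v ^ 2) • Kel)
    (hKj : Ej * Kel = Kel * Ej) :
    ((v : F₀) - v⁻¹)⁻¹ • ((sq : F₀) • (X * (((v : F₀) - v⁻¹)⁻¹ •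
        ((sq : F₀) • (Ej * Ei) - (sq : F₀)⁻¹ • (Ei * Ej))))
      - (sq : F₀)⁻¹ • ((((v : F₀) - v⁻¹)⁻¹ •
        ((sq : F₀) • (Ej * Ei) - (sq : F₀)⁻¹ • (Ei * Ej))) * X)) = Kel * Ej := by
  have h := keyA (R := Rᵐᵒᵖ) (MulOpposite.op Ei) (MulOpposite.op Ej)
    (MulOpposite.op X) (MulOpposite.op Kel)
    (by rw [← MulOpposite.op_mul, hjX]; simp [MulOpposite.op_smul, MulOpposite.op_mul])
    (by rw [← MulOpposite.op_mul, hiX]; simp [MulOpposite.op_smul, MulOpposite.op_mul,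
      MulOpposite.op_add])
    (by rw [← MulOpposite.op_mul, ← MulOpposite.op_mul, hKj])
  rw [show MulOpposite.op Kel * MulOpposite.op Ej = MulOpposite.op (Kel * Ej) from by
    rw [← MulOpposite.op_mul, hKj]] at h
  apply MulOpposite.op_injective
  simp only [MulOpposite.op_smul, MulOpposite.op_sub, MulOpposite.op_mul] at h ⊢
  exact h

lemma pulloutA {R : Type} [Ring R] [Algebra F₀ R] (T Y Q W : R)
    (hQ : ∀ x, Q * x = x * Q)
    (h : ((v : F₀) - v⁻¹)⁻¹ • ((sq : F₀) • (T * Y) - (sq : F₀)⁻¹ • (Y * T)) = W) :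
    ((v : F₀) - v⁻¹)⁻¹ • ((sq : F₀) • (T * (Y * Q)) - (sq : F₀)⁻¹ • ((Y * Q) * T)) = W * Q := by
  rw [← h, smul_mul_assoc, sub_mul, smul_mul_assoc, smul_mul_assoc]
  congr 2
  · rw [mul_assoc]
  · rw [mul_assoc, hQ T, ← mul_assoc]

lemma pulloutB {R : Type} [Ring R] [Algebra F₀ R] (T X Q W : R)
    (hQ : ∀ x, Q * x = x * Q)
    (h : ((v : F₀) - v⁻¹)⁻¹ • ((sq : F₀) • (X * T) - (sq : F₀)⁻¹ • (T * X)) = W) :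
    ((v : F₀) - v⁻¹)⁻¹ • ((sq : F₀) • ((X * Q) * T) - (sq : F₀)⁻¹ • (T * (X * Q))) = W * Q := by
  rw [← h, smul_mul_assoc, sub_mul, smul_mul_assoc, smul_mul_assoc]
  congr 2
  · rw [mul_assoc, hQ T, ← mul_assoc]
  · rw [mul_assoc]

lemma algHom_ext {f g : A a →ₐ[F₀] A a}
    (hE : ∀ (j : I) (m : ℤ), f (E a j m) = g (E a j m))
    (hK : ∀ (j : I) (m : ℤ), f (K a j m) = g (K a j m))
    (hKi : ∀ (j : I) (m : ℤ), f (Kinv a j m) = g (Kinv a j m)) : f = g := by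
  apply RingQuot.ringQuot_ext'
  apply FreeAlgebra.hom_ext
  funext x
  cases x with
  | E j m => exact hE j m
  | K j m => exact hK j m
  | Kinv j m => exact hKi j m

lemma vpow_neg_one : (v : F₀) ^ (-1 : ℤ) = v⁻¹ := zpow_neg_one v

lemma vpow_two : (v : F₀) ^ (2 : ℤ) = v ^ 2 := by norm_cast

/-- Uniqueness of the image of an inverse under an algebra map. -/
lemma map_inv_eq {σ : A a →ₐ[F₀] A a} {k k' c : A a}
    (hk'k : k' * k = 1) (h1 : σ k * c = 1) : σ k' = c := by
  calc σ k' = σ k' * (σ k * c) := by rw [h1, mul_one]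
    _ = σ (k' * k) * c := by rw [map_mul, mul_assoc]
    _ = c := by rw [hk'k, map_one, one_mul]


end SDHall

open SDHall

/-- The endomorphisms `σᵢ` and `σᵢ'` of `𝒜` are mutually inverse; in
particular each `σᵢ` is an `F`-algebra automorphism of `𝒜`. -/
theorem sigma_sigma'_inverse (I : Type) [Fintype I] (a : I → I → ℤ)
    (hA : IsCartan a) (i : I)
    (σ σ' : A a →ₐ[F₀] A a) (hσ : SigmaSpec a i σ) (hσ' : SigmaSpec' a i σ') :
    σ.comp σ' = AlgHom.id F₀ (A a) ∧ σ'.comp σ = AlgHom.id F₀ (A a) := by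
  obtain ⟨hsymm, hdiag, hoff⟩ := hA
  obtain ⟨hσE, hσE1, hσE0, hσK, hσK1, hσK0⟩ := hσ
  obtain ⟨hτE, hτE1, hτE0, hτK, hτK1, hτK0⟩ := hσ'
  -- values of σ and σ' on the inverse generators
  have kinvvals : ∀ τ : A a →ₐ[F₀] A a,
      (∀ m : ℤ, τ (K a i m) = Kinv a i m) →
      (∀ (j : I) (m : ℤ), a i j = -1 → τ (K a j m) = K a i m * K a j m) →
      (∀ (j : I) (m : ℤ), a i j = 0 → τ (K a j m) = K a j m) →
      (∀ m : ℤ, τ (Kinv a i m) = K a i m) ∧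
      (∀ (j : I) (m : ℤ), a i j = -1 → τ (Kinv a j m) = Kinv a i m * Kinv a j m) ∧
      (∀ (j : I) (m : ℤ), a i j = 0 → τ (Kinv a j m) = Kinv a j m) := by
    intro τ hK hK1 hK0
    refine ⟨fun m => map_inv_eq (Kinv_mul_K i m) (by rw [hK m, Kinv_mul_K]),
      fun j m hj => map_inv_eq (Kinv_mul_K j m) ?_,
      fun j m hj => map_inv_eq (Kinv_mul_K j m) (by rw [hK0 j m hj, K_mul_Kinv])⟩
    rw [hK1 j m hj]
    calc K a i m * K a j m * (Kinv a i m * Kinv a j m)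
        = K a i m * ((K a j m * Kinv a i m) * Kinv a j m) := by
          rw [mul_assoc, mul_assoc]
      _ = K a i m * ((Kinv a i m * K a j m) * Kinv a j m) := by
          rw [K_central j m (Kinv a i m)]
      _ = K a i m * Kinv a i m * (K a j m * Kinv a j m) := by
          rw [mul_assoc (Kinv a i m), ← mul_assoc (K a i m)]
      _ = 1 := by rw [K_mul_Kinv, K_mul_Kinv, mul_one]
  obtain ⟨hσKi, hσKi1, hσKi0⟩ := kinvvals σ hσK hσK1 hσK0
  obtain ⟨hτKi, hτKi1, hτKi0⟩ := kinvvals σ' hτK hτK1 hτK0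
  constructor
  · apply algHom_ext
    · intro j m
      simp only [AlgHom.coe_comp, Function.comp_apply, AlgHom.coe_id, id_eq]
      by_cases hji : j = i
      · subst hji
        rw [hτE m, map_mul, hσE (m - 1), hσKi (m - 1),
          show m - 1 + 1 = m from by omega, mul_assoc, Kinv_mul_K, mul_one]
      · rcases hoff i j (Ne.symm hji) with hj | hj
        · rw [hτE0 j m hj, hσE0 j m hj]
        · have hne : i ≠ j := Ne.symm hji
          have hYj : E a i (m + 1) * E a j m = (v : F₀)⁻¹ • (E a j m * E a i (m + 1)) := by
            have h := rel4_ne (a := a) hne m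
            rw [hj, vpow_neg_one] at h
            exact h
          have hYi : E a i (m + 1) * E a i m =
              ((v : F₀) ^ 2) • (E a i m * E a i (m + 1)) + ((1 : F₀) - v ^ 2) • K a i m := by
            have h := rel4_eq (a := a) i m
            rw [hdiag i, vpow_two] at h
            exact h
          have hmain := keyA (E a i m) (E a j m) (E a i (m + 1)) (K a i m) hYj hYi
            (K_central i m (E a j m)).symm
          rw [hτE1 j m hj]
          simp only [T, map_smul, map_sub, map_mul, hσE, hσE1 j m hj]
          rw [pulloutA _ _ _ _ (Kinv_central i m) hmain]
          rw [mul_assoc, ← Kinv_central i m (E a j m), ← mul_assoc, K_mul_Kinv, one_mul]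
    · intro j m
      simp only [AlgHom.coe_comp, Function.comp_apply, AlgHom.coe_id, id_eq]
      by_cases hji : j = i
      · subst hji
        rw [hτK m, hσKi m]
      · rcases hoff i j (Ne.symm hji) with hj | hj
        · rw [hτK0 j m hj, hσK0 j m hj]
        · rw [hτK1 j m hj, map_mul, hσK m, hσK1 j m hj, ← mul_assoc, Kinv_mul_K, one_mul]
    · intro j m
      simp only [AlgHom.coe_comp, Function.comp_apply, AlgHom.coe_id, id_eq]
      by_cases hji : j = i
      · subst hji
        rw [hτKi m, hσK m]
      · rcases hoff i j (Ne.symm hji) with hj | hj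
        · rw [hτKi0 j m hj, hσKi0 j m hj]
        · rw [hτKi1 j m hj, map_mul, hσKi m, hσKi1 j m hj, ← mul_assoc, K_mul_Kinv, one_mul]
  · apply algHom_ext
    · intro j m
      simp only [AlgHom.coe_comp, Function.comp_apply, AlgHom.coe_id, id_eq]
      by_cases hji : j = i
      · subst hji
        rw [hσE m, map_mul, hτE (m + 1), hτKi m,
          show m + 1 - 1 = m from by omega, mul_assoc, Kinv_mul_K, mul_one]
      · rcases hoff i j (Ne.symm hji) with hj | hj
        · rw [hσE0 j m hj, hτE0 j m hj]
        · have hne : i ≠ j := Ne.symm hji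
          have hjX : E a j m * E a i (m - 1) = (v : F₀)⁻¹ • (E a i (m - 1) * E a j m) := by
            have h := rel4_ne (a := a) (Ne.symm hne) (m - 1)
            rw [show m - 1 + 1 = m from by omega, hsymm j i, hj, vpow_neg_one] at h
            exact h
          have hiX : E a i m * E a i (m - 1) =
              ((v : F₀) ^ 2) • (E a i (m - 1) * E a i m) + ((1 : F₀) - v ^ 2) • K a i (m - 1) := by
            have h := rel4_eq (a := a) i (m - 1)
            rw [show m - 1 + 1 = m from by omega, hdiag i, vpow_two] at h
            exact h
          have hmain := keyB (E a i m) (E a j m) (E a i (m - 1)) (K a i (m - 1)) hjX hiX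
            (K_central i (m - 1) (E a j m)).symm
          rw [hσE1 j m hj]
          simp only [T, map_smul, map_sub, map_mul, hτE, hτE1 j m hj]
          rw [pulloutB _ _ _ _ (Kinv_central i (m - 1)) hmain]
          rw [mul_assoc, ← Kinv_central i (m - 1) (E a j m), ← mul_assoc, K_mul_Kinv, one_mul]
    · intro j m
      simp only [AlgHom.coe_comp, Function.comp_apply, AlgHom.coe_id, id_eq]
      by_cases hji : j = i
      · subst hji
        rw [hσK m, hτKi m]
      · rcases hoff i j (Ne.symm hji) with hj | hj
        · rw [hσK0 j m hj, hτK0 j m hj]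
        · rw [hσK1 j m hj, map_mul, hτK m, hτK1 j m hj, ← mul_assoc, Kinv_mul_K, one_mul]
    · intro j m
      simp only [AlgHom.coe_comp, Function.comp_apply, AlgHom.coe_id, id_eq]
      by_cases hji : j = i
      · subst hji
        rw [hσKi m, hτK m]
      · rcases hoff i j (Ne.symm hji) with hj | hj
        · rw [hσKi0 j m hj, hτKi0 j m hj]
        · rw [hσKi1 j m hj, map_mul, hτKi m, hτKi1 j m hj, ← mul_assoc, K_mul_Kinv, one_mul]
end
end

section
/- Let i, j, k ∈ I with a_{ij} = −1, a_{ik} = −1 and a_{jk} = 0, and let m ∈ ℤ. Set F := (v^{1/2}E_{k,m}E_{i,m} − v^{−1/2}E_{i,m}E_{k,m})/(v − v^{−1}) in 𝒜. Then the quantum Serre relation holds for F and E_{j,m}: F²E_{j,m} − (v + v^{−1})F E_{j,m} F + E_{j,m}F² = 0. -/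
/-!
Braid group action on the twisted semi-derived Hall algebra (Contu, arXiv:2410.18604).

We work with the algebra `𝒜 = 𝒮𝒟ℋ_tw(C^b(𝒫))` given by its presentation
(Proposition `prop_presenentation_semiderived_E_i` of the paper): generators
`E_{i,m}`, `K_{i,m}`, `K_{i,m}⁻¹` (`i ∈ I`, `m ∈ ℤ`) over `F = ℚ(v^{1/2})`,
subject to the relations (SD0)–(SD5).
-/

noncomputable section

open SDHall


namespace SDHall

lemma sq_ne_zero : sq ≠ 0 := RatFunc.X_ne_zero

lemma aux41 : (sq : F₀) ^ 4 + 1 ≠ 0 := by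
  have h : (sq : F₀) ^ 4 + 1 = algebraMap (Polynomial ℚ) F₀ (Polynomial.X ^ 4 + 1) := by
    simp [sq, map_add, map_pow, RatFunc.algebraMap_X]
  rw [h]
  exact RatFunc.algebraMap_ne_zero (by intro hc; simpa using congrArg (Polynomial.eval 0) hc)

lemma s_ne_zero : v + v⁻¹ ≠ 0 := by
  have h : v + v⁻¹ = (sq ^ 4 + 1) / sq ^ 2 := by
    rw [eq_div_iff (pow_ne_zero 2 sq_ne_zero), add_mul, show v = sq ^ 2 from rfl,
      inv_mul_cancel₀ (pow_ne_zero 2 sq_ne_zero)]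
    ring
  rw [h]
  exact div_ne_zero aux41 (pow_ne_zero _ sq_ne_zero)

set_option maxHeartbeats 2000000 in
attribute [-instance] RatFunc.instAlgebraOfPolynomial in
lemma key {R : Type} [Ring R] [Algebra F₀ R] (X Y Z : R)
    (h1 : Z * X = X * Z)
    (h2 : Y ^ 2 * Z - (v + v⁻¹) • (Y * Z * Y) + Z * Y ^ 2 = 0)
    (h3 : Y ^ 2 * X - (v + v⁻¹) • (Y * X * Y) + X * Y ^ 2 = 0)
    (h4 : X ^ 2 * Y - (v + v⁻¹) • (X * Y * X) + Y * X ^ 2 = 0) :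
    (sq • (X * Y) - sq⁻¹ • (Y * X)) * (sq • (X * Y) - sq⁻¹ • (Y * X)) * Z
      - (v + v⁻¹) • ((sq • (X * Y) - sq⁻¹ • (Y * X)) * Z * (sq • (X * Y) - sq⁻¹ • (Y * X)))
      + Z * ((sq • (X * Y) - sq⁻¹ • (Y * X)) * (sq • (X * Y) - sq⁻¹ • (Y * X))) = 0 := by
  have hzx : Z * X - X * Z = 0 := sub_eq_zero_of_eq h1
  have cert :
    (v + v⁻¹) • ((sq • (X * Y) - sq⁻¹ • (Y * X)) * (sq • (X * Y) - sq⁻¹ • (Y * X)) * Z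
      - (v + v⁻¹) • ((sq • (X * Y) - sq⁻¹ • (Y * X)) * Z * (sq • (X * Y) - sq⁻¹ • (Y * X)))
      + Z * ((sq • (X * Y) - sq⁻¹ • (Y * X)) * (sq • (X * Y) - sq⁻¹ • (Y * X))))
    = (v + v⁻¹) • ((Z * X - X * Z) * (X * (Y * Y)))
    + v • (X * (Z * X - X * Z) * (Y * Y))
    + (-(v * (v + v⁻¹) ^ 2)) • (X * Y * (Z * X - X * Z) * Y)
    + (v + v⁻¹) • (X * Y * Y * (Z * X - X * Z))
    + (-(v⁻¹ * (v + v⁻¹))) • ((Z * X - X * Z) * (Y * (X * Y)))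
    + (-(v⁻¹ * (v + v⁻¹))) • (Y * (Z * X - X * Z) * (X * Y))
    + (v * (v + v⁻¹)) • (Y * X * (Z * X - X * Z) * Y)
    + (-v) • ((Z * X - X * Z) * (Y * (Y * X)))
    + ((v + v⁻¹) ^ 2 * v⁻¹) • (Y * (Z * X - X * Z) * (Y * X))
    + (-v⁻¹) • (Y * Y * (Z * X - X * Z) * X)
    + (-v⁻¹) • (Y * Y * X * (Z * X - X * Z))
    + v⁻¹ • ((Y ^ 2 * Z - (v + v⁻¹) • (Y * Z * Y) + Z * Y ^ 2) * (X * X))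
    + (-(v + v⁻¹)) • (X * (Y ^ 2 * Z - (v + v⁻¹) • (Y * Z * Y) + Z * Y ^ 2) * X)
    + v • (X * X * (Y ^ 2 * Z - (v + v⁻¹) • (Y * Z * Y) + Z * Y ^ 2))
    + (-v⁻¹) • ((Y ^ 2 * X - (v + v⁻¹) • (Y * X * Y) + X * Y ^ 2) * (X * Z))
    + v⁻¹ • (X * (Y ^ 2 * X - (v + v⁻¹) • (Y * X * Y) + X * Y ^ 2) * Z)
    + v⁻¹ • (X * Z * (Y ^ 2 * X - (v + v⁻¹) • (Y * X * Y) + X * Y ^ 2))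
    + (-v⁻¹) • (Z * (Y ^ 2 * X - (v + v⁻¹) • (Y * X * Y) + X * Y ^ 2) * X)
    + (-(v + v⁻¹)) • ((X ^ 2 * Y - (v + v⁻¹) • (X * Y * X) + Y * X ^ 2) * (Y * Z))
    + (v⁻¹ * (v + v⁻¹)) • (Y * Z * (X ^ 2 * Y - (v + v⁻¹) • (X * Y * X) + Y * X ^ 2))
    + (v * (v + v⁻¹)) • ((X ^ 2 * Y - (v + v⁻¹) • (X * Y * X) + Y * X ^ 2) * (Z * Y))
    + (-(v + v⁻¹)) • (Z * (X ^ 2 * Y - (v + v⁻¹) • (X * Y * X) + Y * X ^ 2) * Y) := by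
    have hv : v = sq ^ 2 := rfl
    have hvi : v⁻¹ = sq⁻¹ ^ 2 := by rw [hv, ← inv_pow]
    simp only [hv, hvi, pow_two, mul_add, add_mul, mul_sub, sub_mul, smul_mul_assoc,
      mul_smul_comm, smul_sub, smul_add, smul_smul, mul_assoc]
    match_scalars <;> field_simp [sq_ne_zero] <;> ring
  have h0 : (v + v⁻¹) • ((sq • (X * Y) - sq⁻¹ • (Y * X)) * (sq • (X * Y) - sq⁻¹ • (Y * X)) * Z
      - (v + v⁻¹) • ((sq • (X * Y) - sq⁻¹ • (Y * X)) * Z * (sq • (X * Y) - sq⁻¹ • (Y * X)))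
      + Z * ((sq • (X * Y) - sq⁻¹ • (Y * X)) * (sq • (X * Y) - sq⁻¹ • (Y * X)))) = 0 := by
    rw [cert, hzx, h2, h3, h4]
    simp
  have h1' := congrArg (fun x => (v + v⁻¹)⁻¹ • x) h0
  simpa [smul_smul, inv_mul_cancel₀ s_ne_zero] using h1'

attribute [-instance] RatFunc.instAlgebraOfPolynomial in
lemma expand_smul {R : Type} [Ring R] [Algebra F₀ R] (G Z : R) (c : F₀) :
    (c • G) ^ 2 * Z - (v + v⁻¹) • ((c • G) * Z * (c • G)) + Z * (c • G) ^ 2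
      = (c * c) • (G * G * Z - (v + v⁻¹) • (G * Z * G) + Z * (G * G)) := by
  simp only [pow_two, smul_mul_assoc, mul_smul_comm, smul_smul, smul_sub, smul_add]
  match_scalars <;> ring

end SDHall

/-- For `a_{ij} = −1`, `a_{ik} = −1`, `a_{jk} = 0` and `m ∈ ℤ`, set
`F := (v^{1/2}E_{k,m}E_{i,m} − v^{−1/2}E_{i,m}E_{k,m})/(v − v^{−1})`. Then the quantum
Serre relation `F²E_{j,m} − (v + v⁻¹)F E_{j,m} F + E_{j,m}F² = 0` holds in `𝒜`. -/
theorem serre_mixed (I : Type) [Fintype I] (a : I → I → ℤ)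
    (hA : IsCartan a) (i j k : I) (hij : a i j = -1) (hik : a i k = -1)
    (hjk : a j k = 0) (m : ℤ) :
    (T a k i m) ^ 2 * E a j m
      - (v + v⁻¹) • (T a k i m * E a j m * T a k i m)
      + E a j m * (T a k i m) ^ 2 = 0 := by
  have hki : a k i = -1 := by rw [hA.1 k i]; exact hik
  have h1 : E a j m * E a k m = E a k m * E a j m := by
    simpa only [map_mul, E] using RingQuot.mkAlgHom_rel F₀ (Rel.sd2 j k m hjk)
  have h2 : E a i m ^ 2 * E a j m - (v + v⁻¹) • (E a i m * E a j m * E a i m)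
      + E a j m * E a i m ^ 2 = 0 := by
    simpa only [map_add, map_sub, map_mul, map_pow, map_smul, map_zero, E] using
      RingQuot.mkAlgHom_rel F₀ (Rel.sd3 i j m hij)
  have h3 : E a i m ^ 2 * E a k m - (v + v⁻¹) • (E a i m * E a k m * E a i m)
      + E a k m * E a i m ^ 2 = 0 := by
    simpa only [map_add, map_sub, map_mul, map_pow, map_smul, map_zero, E] using
      RingQuot.mkAlgHom_rel F₀ (Rel.sd3 i k m hik)
  have h4 : E a k m ^ 2 * E a i m - (v + v⁻¹) • (E a k m * E a i m * E a k m)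
      + E a i m * E a k m ^ 2 = 0 := by
    simpa only [map_add, map_sub, map_mul, map_pow, map_smul, map_zero, E] using
      RingQuot.mkAlgHom_rel F₀ (Rel.sd3 k i m hki)
  have hkey := key (E a k m) (E a i m) (E a j m) h1 h2 h3 h4
  have hT : T a k i m
      = (v - v⁻¹)⁻¹ • (SDHall.sq • (E a k m * E a i m) - SDHall.sq⁻¹ • (E a i m * E a k m)) := rfl
  rw [hT]
  have e2 : ((v - v⁻¹)⁻¹ • (SDHall.sq • (E a k m * E a i m) - SDHall.sq⁻¹ • (E a i m * E a k m))) ^ 2 * E a j m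
      - (v + v⁻¹) • (((v - v⁻¹)⁻¹ • (SDHall.sq • (E a k m * E a i m) - SDHall.sq⁻¹ • (E a i m * E a k m)))
          * E a j m * ((v - v⁻¹)⁻¹ • (SDHall.sq • (E a k m * E a i m) - SDHall.sq⁻¹ • (E a i m * E a k m))))
      + E a j m * ((v - v⁻¹)⁻¹ • (SDHall.sq • (E a k m * E a i m) - SDHall.sq⁻¹ • (E a i m * E a k m))) ^ 2
      = ((v - v⁻¹)⁻¹ * (v - v⁻¹)⁻¹) •
        ((SDHall.sq • (E a k m * E a i m) - SDHall.sq⁻¹ • (E a i m * E a k m))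
            * (SDHall.sq • (E a k m * E a i m) - SDHall.sq⁻¹ • (E a i m * E a k m)) * E a j m
          - (v + v⁻¹) • ((SDHall.sq • (E a k m * E a i m) - SDHall.sq⁻¹ • (E a i m * E a k m)) * E a j m
              * (SDHall.sq • (E a k m * E a i m) - SDHall.sq⁻¹ • (E a i m * E a k m)))
          + E a j m * ((SDHall.sq • (E a k m * E a i m) - SDHall.sq⁻¹ • (E a i m * E a k m))
              * (SDHall.sq • (E a k m * E a i m) - SDHall.sq⁻¹ • (E a i m * E a k m)))) :=
    expand_smul _ _ _
  have e3 : (SDHall.sq • (E a k m * E a i m) - SDHall.sq⁻¹ • (E a i m * E a k m))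
        * (SDHall.sq • (E a k m * E a i m) - SDHall.sq⁻¹ • (E a i m * E a k m)) * E a j m
      - (v + v⁻¹) • ((SDHall.sq • (E a k m * E a i m) - SDHall.sq⁻¹ • (E a i m * E a k m)) * E a j m
          * (SDHall.sq • (E a k m * E a i m) - SDHall.sq⁻¹ • (E a i m * E a k m)))
      + E a j m * ((SDHall.sq • (E a k m * E a i m) - SDHall.sq⁻¹ • (E a i m * E a k m))
          * (SDHall.sq • (E a k m * E a i m) - SDHall.sq⁻¹ • (E a i m * E a k m))) = (0 : A a) := hkey
  rw [e2, e3, smul_zero]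
end
end

section
/- Let i, j, k ∈ I with a_{ij} = 0, a_{ik} = −1 and a_{jk} = −1, and let m ∈ ℤ. Set F_i := (v^{1/2}E_{k,m}E_{i,m} − v^{−1/2}E_{i,m}E_{k,m})/(v − v^{−1}) and F_j := (v^{1/2}E_{k,m}E_{j,m} − v^{−1/2}E_{j,m}E_{k,m})/(v − v^{−1}) in 𝒜. Then F_i and F_j commute: F_i F_j = F_j F_i. -/
/-!
Braid group action on the twisted semi-derived Hall algebra (Contu, arXiv:2410.18604).

We work with the algebra `𝒜 = 𝒮𝒟ℋ_tw(C^b(𝒫))` given by its presentation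
(Proposition `prop_presenentation_semiderived_E_i` of the paper): generators
`E_{i,m}`, `K_{i,m}`, `K_{i,m}⁻¹` (`i ∈ I`, `m ∈ ℤ`) over `F = ℚ(v^{1/2})`,
subject to the relations (SD0)–(SD5).
-/

noncomputable section

namespace SDHall

lemma lam_ne_zero : (sq ^ 2 + (sq ^ 2)⁻¹ : F₀) ≠ 0 := by
  intro h
  have hv : (sq ^ 2 : F₀) ≠ 0 := pow_ne_zero _ RatFunc.X_ne_zero
  have h2 : (sq : F₀) ^ 4 + 1 = 0 := by
    have := congrArg (· * sq ^ 2) h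
    field_simp at this
    rw [mul_zero, mul_div_cancel_left₀ _ (show (sq : F₀) ≠ 0 from RatFunc.X_ne_zero)] at this; exact this
  have h4 : (algebraMap (Polynomial ℚ) (RatFunc ℚ)) (Polynomial.X ^ 4 + 1) = 0 := by
    simpa [map_add, map_pow, RatFunc.algebraMap_X, sq] using h2
  have h5 : (Polynomial.X ^ 4 + 1 : Polynomial ℚ) = 0 :=
    (map_eq_zero_iff _ (IsFractionRing.injective (Polynomial ℚ) (RatFunc ℚ))).mp h4
  have := congrArg (Polynomial.coeff · 0) h5
  simp [Polynomial.coeff_X_pow] at this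

/-- Expansion of the product of two `T`-type elements, over a general field. -/
lemma expandTT {K R : Type} [Field K] [Ring R] [Algebra K R] {s : K} (hs0 : s ≠ 0) (c : K)
    (P Q U W : R) :
    (c • (s • P - s⁻¹ • Q)) * (c • (s • U - s⁻¹ • W))
      = (c * c * (s * s)) • (P * U) - (c * c) • (P * W)
        - (c * c) • (Q * U) + (c * c * (s⁻¹ * s⁻¹)) • (Q * W) := by
  simp only [smul_sub, sub_mul, mul_sub, smul_mul_assoc, mul_smul_comm, smul_smul]
  match_scalars <;> field_simp <;> ring

/-- Core commutation computation, over a general field. -/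
lemma core {K R : Type} [Field K] [Ring R] [Algebra K R] (X Y Z : R) (s c : K)
    (hs0 : s ≠ 0)
    (hl : (s ^ 2 + (s ^ 2)⁻¹ : K) ≠ 0)
    (hXY : X * Y = Y * X)
    (hZX : (s ^ 2 + (s ^ 2)⁻¹) • (Z * (X * Z)) = Z * (Z * X) + X * (Z * Z))
    (hZY : (s ^ 2 + (s ^ 2)⁻¹) • (Z * (Y * Z)) = Z * (Z * Y) + Y * (Z * Z)) :
    (c • (s • (Z * X) - s⁻¹ • (X * Z))) * (c • (s • (Z * Y) - s⁻¹ • (Y * Z)))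
      = (c • (s • (Z * Y) - s⁻¹ • (Y * Z))) * (c • (s • (Z * X) - s⁻¹ • (X * Z))) := by
  suffices h : (s ^ 2 + (s ^ 2)⁻¹) • ((c • (s • (Z * X) - s⁻¹ • (X * Z))) * (c • (s • (Z * Y) - s⁻¹ • (Y * Z))))
      = (s ^ 2 + (s ^ 2)⁻¹) • ((c • (s • (Z * Y) - s⁻¹ • (Y * Z))) * (c • (s • (Z * X) - s⁻¹ • (X * Z)))) by
    have h2 := congrArg (fun x => (s ^ 2 + (s ^ 2)⁻¹)⁻¹ • x) h
    simpa only [smul_smul, inv_mul_cancel₀ hl, one_smul] using h2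
  rw [expandTT hs0, expandTT hs0]
  have hs1 : (s ^ 2 + (s ^ 2)⁻¹) • (Z * X * (Z * Y)) = Z * (Z * (X * Y)) + X * (Z * (Z * Y)) := by
    have h := congrArg (· * Y) hZX
    simpa only [smul_mul_assoc, add_mul, mul_assoc] using h
  have hs2 : (s ^ 2 + (s ^ 2)⁻¹) • (X * Z * (Y * Z)) = X * (Z * (Z * Y)) + X * (Y * (Z * Z)) := by
    have h := congrArg (X * ·) hZY
    simpa only [mul_smul_comm, mul_add, mul_assoc] using h
  have hs3 : (s ^ 2 + (s ^ 2)⁻¹) • (Z * Y * (Z * X)) = Z * (Z * (Y * X)) + Y * (Z * (Z * X)) := by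
    have h := congrArg (· * X) hZY
    simpa only [smul_mul_assoc, add_mul, mul_assoc] using h
  have hs4 : (s ^ 2 + (s ^ 2)⁻¹) • (Y * Z * (X * Z)) = Y * (Z * (Z * X)) + Y * (X * (Z * Z)) := by
    have h := congrArg (Y * ·) hZX
    simpa only [mul_smul_comm, mul_add, mul_assoc] using h
  have hw1 : Z * X * (Y * Z) = Z * Y * (X * Z) := by
    rw [mul_assoc, mul_assoc, ← mul_assoc X Y Z, hXY, mul_assoc]
  have hw2 : Z * (Z * (X * Y)) = Z * (Z * (Y * X)) := by rw [hXY]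
  have hw3 : X * (Y * (Z * Z)) = Y * (X * (Z * Z)) := by
    rw [← mul_assoc, hXY, mul_assoc]
  have hw4 : X * Z * (Z * Y) = X * (Z * (Z * Y)) := by rw [mul_assoc]
  have hw5 : Y * Z * (Z * X) = Y * (Z * (Z * X)) := by rw [mul_assoc]
  linear_combination (norm := module)
    (c * c * (s * s)) • hs1 + (c * c * (s⁻¹ * s⁻¹)) • hs2
      - (c * c * (s * s)) • hs3 - (c * c * (s⁻¹ * s⁻¹)) • hs4
      - ((s ^ 2 + (s ^ 2)⁻¹) * (c * c)) • hw1
      + (c * c * (s * s)) • hw2 + (c * c * (s⁻¹ * s⁻¹)) • hw3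
      - ((s ^ 2 + (s ^ 2)⁻¹) * (c * c)) • hw4
      + ((s ^ 2 + (s ^ 2)⁻¹) * (c * c)) • hw5

end SDHall

open SDHall

/-- For `a_{ij} = 0`, `a_{ik} = −1`, `a_{jk} = −1` and `m ∈ ℤ`, the
elements `Fᵢ := (v^{1/2}E_{k,m}E_{i,m} − v^{−1/2}E_{i,m}E_{k,m})/(v − v^{−1})` and
`Fⱼ := (v^{1/2}E_{k,m}E_{j,m} − v^{−1/2}E_{j,m}E_{k,m})/(v − v^{−1})` commute in `𝒜`. -/
theorem sigma_images_commute (I : Type) [Fintype I] (a : I → I → ℤ)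
    (hA : IsCartan a) (i j k : I) (hij : a i j = 0) (hik : a i k = -1)
    (hjk : a j k = -1) (m : ℤ) :
    T a k i m * T a k j m = T a k j m * T a k i m := by
  obtain ⟨hsym, hdiag, hval⟩ := hA
  have hki : a k i = -1 := by rw [← hsym]; exact hik
  have hkj : a k j = -1 := by rw [← hsym]; exact hjk
  have hXY : E a i m * E a j m = E a j m * E a i m := by
    have h := RingQuot.mkAlgHom_rel F₀ (Rel.sd2 (a := a) i j m hij)
    simpa only [map_mul, E] using h
  have serre : ∀ x : I, a k x = -1 →
      (v + v⁻¹) • (E a k m * (E a x m * E a k m))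
        = E a k m * (E a k m * E a x m) + E a x m * (E a k m * E a k m) := by
    intro x hx
    have h := RingQuot.mkAlgHom_rel F₀ (Rel.sd3 (a := a) k x m hx)
    simp only [map_add, map_sub, map_smul, map_mul, map_pow, map_zero, pow_two,
      mul_assoc] at h
    rw [sub_add_eq_add_sub] at h
    have h2 := (sub_eq_zero.mp h).symm
    simpa only [E, mul_assoc] using h2
  have h1 := serre i hki
  have h2 := serre j hkj
  have hv : (v : F₀) = SDHall.sq ^ 2 := rfl
  rw [hv] at h1 h2
  simp only [T, hv]
  exact core (E a i m) (E a j m) (E a k m) SDHall.sq ((SDHall.sq ^ 2 - (SDHall.sq ^ 2)⁻¹)⁻¹)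
    RatFunc.X_ne_zero lam_ne_zero hXY h1 h2
end
end

section
/- Let i, j ∈ I with a_{ij} = −1 and l ∈ ℤ. Set F := (v^{1/2}E_{j,l+2}E_{i,l+2} − v^{−1/2}E_{i,l+2}E_{j,l+2})/(v − v^{−1}) and G := E_{j,l+1}K_{j,l}^{−1} in 𝒜. Then F · G = v · G · F. (This is the verification that σ_j preserves relation (SD5) in the delicate case r = l + 2.) -/
/-!
Braid group action on the twisted semi-derived Hall algebra (Contu, arXiv:2410.18604).

We work with the algebra `𝒜 = 𝒮𝒟ℋ_tw(C^b(𝒫))` given by its presentation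
(Proposition `prop_presenentation_semiderived_E_i` of the paper): generators
`E_{i,m}`, `K_{i,m}`, `K_{i,m}⁻¹` (`i ∈ I`, `m ∈ ℤ`) over `F = ℚ(v^{1/2})`,
subject to the relations (SD0)–(SD5).
-/

noncomputable section

open SDHall

/-- For `a_{ij} = −1` and `l ∈ ℤ`, set
`F := (v^{1/2}E_{j,l+2}E_{i,l+2} − v^{−1/2}E_{i,l+2}E_{j,l+2})/(v − v^{−1})` and
`G := E_{j,l+1}K_{j,l}⁻¹`. Then `F·G = v·G·F` in `𝒜`.
(Verification that `σⱼ` preserves (SD5) in the delicate case `r = l + 2`.) -/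
theorem sd5_preserved_r_eq_l_add_two (I : Type) [Fintype I] (a : I → I → ℤ)
    (hA : IsCartan a) (i j : I) (hij : a i j = -1) (l : ℤ) :
    T a j i (l + 2) * (E a j (l + 1) * Kinv a j l)
      = v • ((E a j (l + 1) * Kinv a j l) * T a j i (l + 2)) := by
  obtain ⟨hsymm, hdiag, _⟩ := hA
  have hne : i ≠ j := by
    intro h; subst h; rw [hdiag i] at hij; omega
  have hsq : sq ≠ 0 := RatFunc.X_ne_zero
  have hv2 : v = sq * sq := by unfold v; ring
  have hvne : v ≠ 0 := by rw [hv2]; exact mul_ne_zero hsq hsq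
  -- abbreviations
  set B := E a j (l + 2) with hB
  set C := E a i (l + 2) with hC
  set D := E a j (l + 1) with hD
  set K1 := K a j (l + 1) with hK1
  set K2 := Kinv a j l with hK2
  -- centrality of K's
  have hKc : ∀ x : A a, K a j (l+1) * x = x * K a j (l+1) := by
    intro x
    obtain ⟨y, rfl⟩ := RingQuot.mkAlgHom_surjective F₀ (Rel a) x
    simpa [K, map_mul] using RingQuot.mkAlgHom_rel F₀ (Rel.sd1 (a := a) j (l+1) y)
  have hKcl : ∀ x : A a, K a j l * x = x * K a j l := by
    intro x
    obtain ⟨y, rfl⟩ := RingQuot.mkAlgHom_surjective F₀ (Rel a) x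
    simpa [K, map_mul] using RingQuot.mkAlgHom_rel F₀ (Rel.sd1 (a := a) j l y)
  have hKK : K a j l * Kinv a j l = 1 := by
    simpa [K, Kinv, map_mul, map_one] using RingQuot.mkAlgHom_rel F₀ (Rel.sd0a (a := a) j l)
  have hKK' : Kinv a j l * K a j l = 1 := by
    simpa [K, Kinv, map_mul, map_one] using RingQuot.mkAlgHom_rel F₀ (Rel.sd0b (a := a) j l)
  have hK2c : ∀ x : A a, K2 * x = x * K2 := by
    intro x
    calc K2 * x = K2 * (x * (K a j l * K2)) := by rw [hKK, mul_one]
      _ = K2 * ((K a j l * x) * K2) := by rw [← mul_assoc x, ← hKcl]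
      _ = (K2 * K a j l) * (x * K2) := by rw [mul_assoc, mul_assoc]
      _ = x * K2 := by rw [hKK', one_mul]
  -- the two key relations
  have hBD : B * D = (v * v) • (D * B) + ((1 : F₀) - v ^ 2) • K1 := by
    have h := RingQuot.mkAlgHom_rel F₀ (Rel.sd4_eq (a := a) j (l+1))
    rw [show l + 1 + 1 = l + 2 by ring] at h
    simpa [hB, hD, hK1, E, K, map_mul, map_add, map_smul, hdiag, zpow_two, pow_two] using h
  have hCD : C * D = v⁻¹ • (D * C) := by
    have h := RingQuot.mkAlgHom_rel F₀ (Rel.sd4_ne (a := a) i j (l+1) hne)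
    rw [show l + 1 + 1 = l + 2 by ring] at h
    simpa [hC, hD, E, map_mul, map_smul, hij, zpow_neg_one] using h
  have sv1 : v⁻¹ * (v * v) = v := by field_simp
  have h1 : B * (C * D) = v • (D * (B * C)) + (v⁻¹ * ((1 : F₀) - v ^ 2)) • (K1 * C) := by
    rw [hCD, mul_smul_comm, ← mul_assoc, hBD, add_mul, smul_mul_assoc, smul_mul_assoc,
      smul_add, smul_smul, smul_smul, mul_assoc, sv1]
  have h2 : C * (B * D) = v • (D * (C * B)) + ((1 : F₀) - v ^ 2) • (K1 * C) := by
    rw [hBD, mul_add, mul_smul_comm, mul_smul_comm, ← mul_assoc, hCD, smul_mul_assoc,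
      smul_smul, ← hKc C, mul_assoc D C B]
    congr 2
    field_simp
  have key : SDHall.sq * (v⁻¹ * ((1 : F₀) - v ^ 2)) = SDHall.sq⁻¹ * ((1 : F₀) - v ^ 2) := by
    rw [hv2]; field_simp [hsq]
  have main : T a j i (l + 2) * D = v • (D * T a j i (l + 2)) := by
    simp only [T, ← hB, ← hC, ← hD]
    rw [smul_mul_assoc, sub_mul, smul_mul_assoc, smul_mul_assoc, mul_assoc, mul_assoc,
      h1, h2, smul_add, smul_add, smul_smul, smul_smul, smul_smul, smul_smul, key]
    simp only [mul_sub, mul_smul_comm, add_sub_add_right_eq_sub, smul_sub, smul_smul]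
    congr 1 <;> · congr 1; ring
  calc T a j i (l + 2) * (D * K2) = (T a j i (l + 2) * D) * K2 := by rw [mul_assoc]
    _ = (v • (D * T a j i (l + 2))) * K2 := by rw [main]
    _ = v • (D * (T a j i (l + 2) * K2)) := by rw [smul_mul_assoc, mul_assoc]
    _ = v • (D * (K2 * T a j i (l + 2))) := by rw [hK2c]
    _ = v • (D * K2 * T a j i (l + 2)) := by rw [mul_assoc]
end
end
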